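/- arXiv:0901.4192 — 3 statements merged into one kernel-verified Lean document; each statement's English description precedes it below -/
import Mathlib

section
/- If an n×n symmetric real matrix R with zero diagonal satisfies ρ(|R|) < 1 (walk-summability), then I - R is positive definite. -/
open Matrix Filter

noncomputable def specRad {n : ℕ} (M : Matrix (Fin n) (Fin n) ℝ) : ℝ :=
  sSup ((fun z => ‖z‖) '' spectrum ℂ (M.map Complex.ofReal))

lemma real_spec_le_specRad {n : ℕ} (M : Matrix (Fin n) (Fin n) ℝ) {t : ℝ}
    (ht : t ∈ spectrum ℝ M) : t ≤ specRad M := by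
  have h1 : (t : ℂ) ∈ spectrum ℂ (M.map Complex.ofReal) := by
    rw [spectrum.mem_iff] at ht ⊢
    intro hu
    apply ht
    rw [Matrix.isUnit_iff_isUnit_det] at hu ⊢
    have hmap : algebraMap ℂ (Matrix (Fin n) (Fin n) ℂ) (t : ℂ) - M.map Complex.ofReal
        = (algebraMap ℝ (Matrix (Fin n) (Fin n) ℝ) t - M).map Complex.ofReal := by
      ext i j
      by_cases h : i = j <;>
        simp [Matrix.algebraMap_eq_diagonal, Matrix.map_apply, Matrix.diagonal_apply, h]
    rw [hmap,
      show (algebraMap ℝ (Matrix (Fin n) (Fin n) ℝ) t - M).map Complex.ofReal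
        = Complex.ofRealHom.mapMatrix (algebraMap ℝ (Matrix (Fin n) (Fin n) ℝ) t - M) from rfl,
      ← RingHom.map_det] at hu
    rw [isUnit_iff_ne_zero] at hu ⊢
    simpa using hu
  have hb : BddAbove ((fun z => ‖z‖) '' spectrum ℂ (M.map Complex.ofReal)) :=
    ((Matrix.finite_spectrum _).image _).bddAbove
  calc t ≤ |t| := le_abs_self t
    _ = ‖(t : ℂ)‖ := by simp
    _ ≤ specRad M := le_csSup hb ⟨(t : ℂ), h1, rfl⟩

lemma rayleigh_le {n : ℕ} (S : Matrix (Fin n) (Fin n) ℝ) (hS : S.IsHermitian)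
    (y : Fin n → ℝ) : y ⬝ᵥ (S *ᵥ y) ≤ specRad S * (y ⬝ᵥ y) := by
  set ρ := specRad S with hρ
  set M : Matrix (Fin n) (Fin n) ℝ := ρ • (1 : Matrix (Fin n) (Fin n) ℝ) - S with hM
  have hMh : M.IsHermitian := by
    simp only [Matrix.IsHermitian, hM, conjTranspose_sub, conjTranspose_smul, conjTranspose_one,
      star_trivial, hS.eq]
  have hpsd : M.PosSemidef := by
    apply hMh.posSemidef_iff_eigenvalues_nonneg.mpr
    intro i
    set μ := hMh.eigenvalues i with hμ
    have hspec : μ ∈ spectrum ℝ M := hMh.eigenvalues_mem_spectrum_real i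
    have hkey : (ρ - μ) ∈ spectrum ℝ S := by
      rw [spectrum.mem_iff] at hspec ⊢
      intro hu
      apply hspec
      have heq : algebraMap ℝ (Matrix (Fin n) (Fin n) ℝ) μ - M
          = -(algebraMap ℝ (Matrix (Fin n) (Fin n) ℝ) (ρ - μ) - S) := by
        simp only [hM, Algebra.algebraMap_eq_smul_one, sub_smul]
        abel
      rw [heq]
      exact hu.neg
    have := real_spec_le_specRad S hkey
    rw [Pi.zero_apply]; linarith
  have h0 := hpsd.dotProduct_mulVec_nonneg y
  simp only [star_trivial, RCLike.re_to_real, hM, Matrix.sub_mulVec,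
    Matrix.smul_mulVec, Matrix.one_mulVec, dotProduct_sub, dotProduct_smul,
    smul_eq_mul] at h0
  linarith

theorem walk_summable_posDef {n : ℕ} (R : Matrix (Fin n) (Fin n) ℝ)
    (hsym : R.IsSymm) (hdiag : ∀ i, R i i = 0)
    (hws : specRad (R.map (fun x => |x|)) < 1) :
    (1 - R).PosDef := by
  set S : Matrix (Fin n) (Fin n) ℝ := R.map (fun x => |x|) with hSdef
  have hRh : R.IsHermitian := by
    ext i j
    simpa using hsym.apply i j
  have hSh : S.IsHermitian := by
    ext i j
    simp only [hSdef, conjTranspose_apply, Matrix.map_apply, star_trivial]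
    rw [hsym.apply i j]
  refine PosDef.of_dotProduct_mulVec_pos (isHermitian_one.sub hRh) fun x hx => ?_
  have hxx : 0 < x ⬝ᵥ x := by
    have hnn : 0 ≤ x ⬝ᵥ x := Finset.sum_nonneg fun i _ => mul_self_nonneg _
    have hne : x ⬝ᵥ x ≠ 0 := fun h0 => hx (dotProduct_self_eq_zero.mp h0)
    exact hnn.lt_of_ne (Ne.symm hne)
  set y : Fin n → ℝ := fun i => |x i| with hy
  have h1 : x ⬝ᵥ (R *ᵥ x) ≤ y ⬝ᵥ (S *ᵥ y) := by
    simp only [dotProduct, Matrix.mulVec, hSdef, hy, Matrix.map_apply]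
    refine Finset.sum_le_sum fun i _ => ?_
    rw [Finset.mul_sum, Finset.mul_sum]
    refine Finset.sum_le_sum fun j _ => ?_
    calc x i * (R i j * x j) ≤ |x i * (R i j * x j)| := le_abs_self _
      _ = |x i| * (|R i j| * |x j|) := by rw [abs_mul, abs_mul]
  have h2 : y ⬝ᵥ (S *ᵥ y) ≤ specRad S * (y ⬝ᵥ y) := rayleigh_le S hSh y
  have h3 : y ⬝ᵥ y = x ⬝ᵥ x := by
    simp only [dotProduct, hy, abs_mul_abs_self]
  have h4 : x ⬝ᵥ (R *ᵥ x) < x ⬝ᵥ x := by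
    calc x ⬝ᵥ (R *ᵥ x) ≤ specRad S * (y ⬝ᵥ y) := h1.trans h2
      _ = specRad S * (x ⬝ᵥ x) := by rw [h3]
      _ < 1 * (x ⬝ᵥ x) := by exact mul_lt_mul_of_pos_right hws hxx
      _ = x ⬝ᵥ x := one_mul _
  simp only [star_trivial, RCLike.re_to_real, Matrix.sub_mulVec, Matrix.one_mulVec,
    dotProduct_sub]
  linarith
end

section
/- Let J ≻ 0 and Γ ⪰ 0 be n×n real symmetric matrices, and let H = (J+Γ)^{-1/2} Γ (J+Γ)^{-1/2}. If λ is an eigenvalue of H, then λ ≠ 1, λ ∈ [0,1), and λ/(1-λ) is an eigenvalue of Γ^{1/2} J^{-1} Γ^{1/2}. -/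
open Matrix

open scoped ComplexOrder in
/-- The positive semidefinite square root of a positive semidefinite matrix
(the definition `Matrix.PosSemidef.sqrt` of the older Mathlib, since removed). -/
noncomputable def Matrix.PosSemidef.sqrt {n 𝕜 : Type*} [Fintype n] [DecidableEq n] [RCLike 𝕜]
    {A : Matrix n n 𝕜} (hA : A.PosSemidef) : Matrix n n 𝕜 :=
  hA.1.eigenvectorUnitary.1 * diagonal ((↑) ∘ (√·) ∘ hA.1.eigenvalues) *
  (star hA.1.eigenvectorUnitary : Matrix n n 𝕜)

open scoped ComplexOrder in
theorem psdSqrt_mul_self_aux {n 𝕜 : Type*} [Fintype n] [DecidableEq n] [RCLike 𝕜]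
    {A : Matrix n n 𝕜} (hA : A.PosSemidef) : hA.sqrt * hA.sqrt = A := by
  have hU : (star hA.1.eigenvectorUnitary : Matrix n n 𝕜) * hA.1.eigenvectorUnitary.1 = 1 :=
    congrArg Subtype.val (Unitary.star_mul_self hA.1.eigenvectorUnitary)
  have hD : diagonal (((↑) ∘ (√·) ∘ hA.1.eigenvalues : n → 𝕜)) *
      diagonal (((↑) ∘ (√·) ∘ hA.1.eigenvalues : n → 𝕜)) =
      diagonal (RCLike.ofReal ∘ hA.1.eigenvalues : n → 𝕜) := by
    rw [diagonal_mul_diagonal]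
    congr 1
    ext i
    simp only [Function.comp]
    rw [← RCLike.ofReal_mul, Real.mul_self_sqrt (hA.eigenvalues_nonneg i)]
  unfold Matrix.PosSemidef.sqrt
  simp only [Matrix.mul_assoc]
  rw [← Matrix.mul_assoc (star hA.1.eigenvectorUnitary : Matrix n n 𝕜), hU, Matrix.one_mul,
    ← Matrix.mul_assoc (diagonal _), hD]
  conv_rhs => rw [hA.1.spectral_theorem, Unitary.conjStarAlgAut_apply]
  simp only [Matrix.mul_assoc]

theorem eigenvalue_H_transform {n : ℕ} (J Γ : Matrix (Fin n) (Fin n) ℝ)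
    (hJ : J.PosDef) (hΓ : Γ.PosSemidef) (lam : ℝ)
    (hlam : ∃ v : Fin n → ℝ, v ≠ 0 ∧
      (((hJ.posSemidef.add hΓ).sqrt)⁻¹ * Γ * ((hJ.posSemidef.add hΓ).sqrt)⁻¹) *ᵥ v
        = lam • v) :
    lam ≠ 1 ∧ 0 ≤ lam ∧ lam < 1 ∧
    ∃ w : Fin n → ℝ, w ≠ 0 ∧
      (hΓ.sqrt * J⁻¹ * hΓ.sqrt) *ᵥ w = (lam / (1 - lam)) • w := by
  obtain ⟨v, hv0, hv⟩ := hlam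
  set S : Matrix (Fin n) (Fin n) ℝ := (hJ.posSemidef.add hΓ).sqrt with hSdef
  have hSS : S * S = J + Γ := psdSqrt_mul_self_aux (hJ.posSemidef.add hΓ)
  clear_value S
  -- S is invertible
  have hdet : S.det ≠ 0 := by
    intro h
    have : (J + Γ).det = 0 := by rw [← hSS, det_mul, h, mul_zero]
    exact (hJ.add_posSemidef hΓ).det_pos.ne' this
  have hSinv : S * S⁻¹ = 1 := mul_nonsing_inv S (isUnit_iff_ne_zero.mpr hdet)
  set u : Fin n → ℝ := S⁻¹ *ᵥ v with hudef
  clear_value u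
  have hSu : S *ᵥ u = v := by
    rw [hudef, mulVec_mulVec, hSinv, one_mulVec]
  have hu0 : u ≠ 0 := by
    intro h
    apply hv0
    rw [← hSu, h, mulVec_zero]
  -- key equation: Γ u = lam • ((J + Γ) *ᵥ u)
  have key : Γ *ᵥ u = lam • ((J + Γ) *ᵥ u) := by
    have hm : S * (S⁻¹ * Γ * S⁻¹) = Γ * S⁻¹ := by
      rw [← Matrix.mul_assoc, ← Matrix.mul_assoc, hSinv, Matrix.one_mul]
    have h1 : S *ᵥ ((S⁻¹ * Γ * S⁻¹) *ᵥ v) = Γ *ᵥ u := by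
      rw [hudef]
      simp only [mulVec_mulVec]
      rw [hm]
    have h2 : S *ᵥ (lam • v) = lam • ((J + Γ) *ᵥ u) := by
      rw [mulVec_smul, ← hSu, mulVec_mulVec, hSS]
    rw [← h1, hv, h2]
  have hJu : J *ᵥ u + Γ *ᵥ u = (J + Γ) *ᵥ u := (add_mulVec J Γ u).symm
  set a : ℝ := u ⬝ᵥ (Γ *ᵥ u) with hadef
  set b : ℝ := u ⬝ᵥ (J *ᵥ u) with hbdef
  have ha : 0 ≤ a := by
    have := hΓ.dotProduct_mulVec_nonneg u
    simpa using this
  have hb : 0 < b := by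
    have := hJ.dotProduct_mulVec_pos hu0
    simpa using this
  have hab : a = lam * (a + b) := by
    have h3 := congrArg (fun x => u ⬝ᵥ x) key
    simp only [dotProduct_smul, ← hJu, dotProduct_add, ← hadef, ← hbdef,
      smul_eq_mul] at h3
    linear_combination h3
  have hlam_nonneg : 0 ≤ lam := by
    have hsum : 0 < a + b := by linarith
    nlinarith
  have hlam_lt : lam < 1 := by nlinarith
  have h1lam : (1 : ℝ) - lam ≠ 0 := by linarith
  refine ⟨by linarith, hlam_nonneg, hlam_lt, ?_⟩
  set μ : ℝ := lam / (1 - lam) with hμdef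
  clear_value μ
  have h2 : Γ *ᵥ u = lam • (J *ᵥ u) + lam • (Γ *ᵥ u) := by
    nth_rewrite 1 [key]
    rw [← hJu, smul_add]
  have h : (1 - lam) • (Γ *ᵥ u) = lam • (J *ᵥ u) := by
    rw [sub_smul, one_smul]
    nth_rewrite 1 [h2]
    abel
  have hGu : Γ *ᵥ u = μ • (J *ᵥ u) := by
    have h4 := congrArg (fun x => (1 - lam)⁻¹ • x) h
    simp only [smul_smul, inv_mul_cancel₀ h1lam, one_smul] at h4
    rw [h4, hμdef, div_eq_inv_mul]
  have hJinv : J⁻¹ * J = 1 := nonsing_inv_mul J (isUnit_iff_ne_zero.mpr hJ.det_pos.ne')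
  have hJiGu : J⁻¹ *ᵥ (Γ *ᵥ u) = μ • u := by
    rw [hGu, mulVec_smul, mulVec_mulVec, hJinv, one_mulVec]
  set T : Matrix (Fin n) (Fin n) ℝ := hΓ.sqrt with hTdef
  have hTT : T * T = Γ := psdSqrt_mul_self_aux hΓ
  clear_value T
  by_cases hw : T *ᵥ u = 0
  · -- then Γ u = 0, so lam = 0, and u itself is an eigenvector
    have hGu0 : Γ *ᵥ u = 0 := by
      rw [← hTT, ← mulVec_mulVec, hw, mulVec_zero]
    have ha0 : a = 0 := by rw [hadef, hGu0, dotProduct_zero]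
    have hlam0 : lam = 0 := le_antisymm (by nlinarith) hlam_nonneg
    have hμ0 : μ = 0 := by rw [hμdef, hlam0, zero_div]
    refine ⟨u, hu0, ?_⟩
    rw [hμ0, zero_smul]
    have : (T * J⁻¹ * T) *ᵥ u = (T * J⁻¹) *ᵥ (T *ᵥ u) := (mulVec_mulVec _ _ _).symm
    rw [this, hw, mulVec_zero]
  · refine ⟨T *ᵥ u, hw, ?_⟩
    calc (T * J⁻¹ * T) *ᵥ (T *ᵥ u)
        = ((T * J⁻¹) * (T * T)) *ᵥ u := by
          rw [mulVec_mulVec, Matrix.mul_assoc (T * J⁻¹) T T]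
      _ = (T * J⁻¹) *ᵥ (Γ *ᵥ u) := by rw [hTT, ← mulVec_mulVec]
      _ = T *ᵥ (J⁻¹ *ᵥ (Γ *ᵥ u)) := by simp only [mulVec_mulVec, Matrix.mul_assoc]
      _ = T *ᵥ (μ • u) := by rw [hJiGu]
      _ = μ • (T *ᵥ u) := mulVec_smul T μ u
end

section
/- Let J ≻ 0 be symmetric positive definite, Γ ⪰ 0 symmetric positive semidefinite, h ∈ ℝ^n. Define the iteration x^{(t+1)} = (J+Γ)^{-1}(h + Γ x^{(t)}). Then for every initialization x^{(0)}, the sequence x^{(t)} converges to x* = J^{-1} h. -/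
open Matrix Filter

/-- Conjugation of a positive definite matrix by an invertible matrix is positive definite. -/
lemma posDef_conj_of_isUnit {m : ℕ} {J B : Matrix (Fin m) (Fin m) ℝ}
    (hJ : J.PosDef) (hB : IsUnit B) : (B * J * Bᴴ).PosDef := by
  refine posDef_iff_dotProduct_mulVec.mpr ⟨?_, ?_⟩
  · exact Matrix.isHermitian_mul_mul_conjTranspose B hJ.1
  · intro x hx
    have hBx : Bᴴ *ᵥ x ≠ 0 := by
      have : Function.Injective (Bᴴ *ᵥ ·) := by
        rw [Matrix.mulVec_injective_iff_isUnit]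
        simpa using hB
      intro hcon
      exact hx (by simpa using this (by simpa using hcon))
    have := hJ.dotProduct_mulVec_pos hBx
    simpa only [star_mulVec, conjTranspose_conjTranspose, dotProduct_mulVec,
      vecMul_vecMul, Matrix.mul_assoc, mulVec_mulVec] using this

theorem iteration_converges {n : ℕ} (J Γ : Matrix (Fin n) (Fin n) ℝ)
    (hJ : J.PosDef) (hΓ : Γ.PosSemidef) (h : Fin n → ℝ)
    (x : ℕ → Fin n → ℝ)
    (hx : ∀ t, x (t + 1) = (J + Γ)⁻¹ *ᵥ (h + Γ *ᵥ x t)) :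
    Tendsto x atTop (nhds (J⁻¹ *ᵥ h)) := by
  classical
  set S : Matrix (Fin n) (Fin n) ℝ := J + Γ with hSdef
  have hS : S.PosDef := hJ.add_posSemidef hΓ
  set R : Matrix (Fin n) (Fin n) ℝ := (open MatrixOrder in CFC.sqrt S) with hRdef
  have hRpsd : R.PosSemidef := (open MatrixOrder in Matrix.nonneg_iff_posSemidef.mp (CFC.sqrt_nonneg S))
  have hRR : R * R = S := (open MatrixOrder in CFC.sqrt_mul_sqrt_self S hS.posSemidef.nonneg)
  have hRunit : IsUnit R := by
    rw [Matrix.isUnit_iff_isUnit_det]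
    have hdet : R.det * R.det = S.det := by rw [← det_mul, hRR]
    have : R.det ≠ 0 := by
      intro h0
      have := hS.det_pos
      rw [← hdet, h0, zero_mul] at this
      exact lt_irrefl _ this
    exact this.isUnit
  clear_value R
  clear hRdef
  have hRinvR : R⁻¹ * R = 1 := nonsing_inv_mul R (isUnit_iff_isUnit_det R |>.mp hRunit)
  have hRRinv : R * R⁻¹ = 1 := mul_nonsing_inv R (isUnit_iff_isUnit_det R |>.mp hRunit)
  have hRinvHerm : (R⁻¹)ᴴ = R⁻¹ := hRpsd.1.inv
  -- the conjugated iteration matrix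
  set A : Matrix (Fin n) (Fin n) ℝ := R⁻¹ * Γ * R⁻¹ with hAdef
  have hApsd : A.PosSemidef := by
    have := hΓ.mul_mul_conjTranspose_same R⁻¹
    rwa [hRinvHerm] at this
  have hSinv : S⁻¹ = R⁻¹ * R⁻¹ := by rw [← hRR, Matrix.mul_inv_rev]
  -- 1 - A is positive definite
  have hOneSub : (1 : Matrix (Fin n) (Fin n) ℝ) - A = R⁻¹ * J * R⁻¹ := by
    have h1 : R⁻¹ * S * R⁻¹ = 1 := by
      rw [← hRR]
      calc R⁻¹ * (R * R) * R⁻¹ = (R⁻¹ * R) * (R * R⁻¹) := by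
            simp only [Matrix.mul_assoc]
          _ = 1 := by rw [hRinvR, hRRinv, one_mul]
    calc (1 : Matrix (Fin n) (Fin n) ℝ) - A = R⁻¹ * S * R⁻¹ - R⁻¹ * Γ * R⁻¹ := by
          rw [h1, hAdef]
        _ = R⁻¹ * J * R⁻¹ := by
          rw [hSdef]
          noncomm_ring
  have hOneSubPD : ((1 : Matrix (Fin n) (Fin n) ℝ) - A).PosDef := by
    rw [hOneSub]
    have := posDef_conj_of_isUnit hJ (Matrix.isUnit_nonsing_inv_iff.mpr hRunit) (B := R⁻¹)
    rwa [hRinvHerm] at this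
  -- eigenvalues of A lie in [0, 1)
  have hAherm : A.IsHermitian := hApsd.1
  have hmu_nonneg : ∀ i, 0 ≤ hAherm.eigenvalues i := fun i => hApsd.eigenvalues_nonneg i
  have hmu_lt_one : ∀ i, hAherm.eigenvalues i < 1 := by
    intro i
    set v : Fin n → ℝ := ⇑(hAherm.eigenvectorBasis i) with hv
    have hv_ne : v ≠ 0 := by
      have := hAherm.eigenvectorBasis.orthonormal.ne_zero i
      intro hcon
      apply this
      ext j
      exact congrFun hcon j
    have hAv : A *ᵥ v = hAherm.eigenvalues i • v := hAherm.mulVec_eigenvectorBasis i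
    have hsub : ((1 : Matrix (Fin n) (Fin n) ℝ) - A) *ᵥ v
        = (1 - hAherm.eigenvalues i) • v := by
      rw [Matrix.sub_mulVec, one_mulVec, hAv, sub_smul, one_smul]
    have hpos := hOneSubPD.dotProduct_mulVec_pos hv_ne
    rw [hsub, dotProduct_smul, smul_eq_mul] at hpos
    have hvv : 0 < dotProduct (star v) v := by
      rwa [dotProduct_star_self_pos_iff]
    nlinarith
  -- powers of A tend to zero
  obtain ⟨U, μ, hUU', hUU, hspec, hmu0, hmu1⟩ :
      ∃ (U : Matrix (Fin n) (Fin n) ℝ) (μ : Fin n → ℝ),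
        star U * U = 1 ∧ U * star U = 1 ∧ A = U * diagonal μ * star U ∧
        (∀ i, 0 ≤ μ i) ∧ (∀ i, μ i < 1) := by
    refine ⟨hAherm.eigenvectorUnitary, hAherm.eigenvalues,
      Matrix.mem_unitaryGroup_iff'.mp hAherm.eigenvectorUnitary.2,
      Matrix.mem_unitaryGroup_iff.mp hAherm.eigenvectorUnitary.2, ?_, hmu_nonneg, hmu_lt_one⟩
    have := hAherm.spectral_theorem
    simpa using this
  have hpow : ∀ t : ℕ, A ^ t = U * diagonal (fun i => μ i ^ t) * star U := by
    intro t
    induction t with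
    | zero => simp [hUU]
    | succ t ih =>
      rw [pow_succ, ih, hspec]
      calc U * diagonal (fun i => μ i ^ t) * star U * (U * diagonal μ * star U)
          = U * (diagonal (fun i => μ i ^ t) * (star U * U) * diagonal μ) * star U := by
            noncomm_ring
        _ = U * diagonal (fun i => μ i ^ (t + 1)) * star U := by
            rw [hUU', Matrix.mul_one, diagonal_mul_diagonal]
            simp [pow_succ]
  have hDtendsto : Tendsto (fun t : ℕ => diagonal (fun i => μ i ^ t))
      atTop (nhds (0 : Matrix (Fin n) (Fin n) ℝ)) := by
    refine tendsto_pi_nhds.mpr ?_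
    intro i
    rw [tendsto_pi_nhds]
    intro j
    by_cases hij : i = j
    · subst hij
      simpa [Matrix.diagonal_apply_eq] using
        tendsto_pow_atTop_nhds_zero_of_lt_one (hmu0 i) (hmu1 i)
    · simpa [Matrix.diagonal_apply_ne _ hij] using tendsto_const_nhds (x := (0:ℝ))
  have hAtendsto : Tendsto (fun t : ℕ => A ^ t) atTop (nhds 0) := by
    have : Tendsto (fun t : ℕ => U * diagonal (fun i => μ i ^ t) * star U)
        atTop (nhds (U * 0 * star U)) :=
      (tendsto_const_nhds.mul hDtendsto).mul tendsto_const_nhds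
    simpa [hpow, Matrix.mul_zero, Matrix.zero_mul] using this
  -- the iteration matrix M and its powers
  set M : Matrix (Fin n) (Fin n) ℝ := S⁻¹ * Γ with hMdef
  have hMA : M = R⁻¹ * A * R := by
    rw [hMdef, hAdef, hSinv]
    calc R⁻¹ * R⁻¹ * Γ = R⁻¹ * (R⁻¹ * Γ) * (R⁻¹ * R) := by rw [hRinvR]; noncomm_ring
      _ = R⁻¹ * (R⁻¹ * Γ * R⁻¹) * R := by noncomm_ring
  have hMpow : ∀ t : ℕ, M ^ t = R⁻¹ * A ^ t * R := by
    intro t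
    induction t with
    | zero => simp [hRinvR]
    | succ t ih =>
      rw [pow_succ, ih, hMA, pow_succ]
      calc R⁻¹ * A ^ t * R * (R⁻¹ * A * R) = R⁻¹ * (A ^ t * (R * R⁻¹) * A) * R := by
            noncomm_ring
        _ = R⁻¹ * (A ^ t * A) * R := by rw [hRRinv, Matrix.mul_one]
  have hMtendsto : Tendsto (fun t : ℕ => M ^ t) atTop (nhds 0) := by
    have : Tendsto (fun t : ℕ => R⁻¹ * A ^ t * R) atTop (nhds (R⁻¹ * 0 * R)) :=
      (tendsto_const_nhds.mul hAtendsto).mul tendsto_const_nhds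
    simpa [hMpow, Matrix.mul_zero, Matrix.zero_mul] using this
  -- fixed point and error recursion
  set xs : Fin n → ℝ := J⁻¹ *ᵥ h with hxs
  have hJxs : J *ᵥ xs = h := by
    rw [hxs, mulVec_mulVec, mul_nonsing_inv J (isUnit_iff_isUnit_det J |>.mp hJ.isUnit),
      one_mulVec]
  have hfix : S⁻¹ *ᵥ (h + Γ *ᵥ xs) = xs := by
    have h1 : h + Γ *ᵥ xs = S *ᵥ xs := by
      rw [hSdef, Matrix.add_mulVec, hJxs]
    rw [h1, mulVec_mulVec, nonsing_inv_mul S (isUnit_iff_isUnit_det S |>.mp hS.isUnit),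
      one_mulVec]
  have herr : ∀ t, x t - xs = M ^ t *ᵥ (x 0 - xs) := by
    intro t
    induction t with
    | zero => simp
    | succ t ih =>
      have hstep : x (t + 1) - xs = M *ᵥ (x t - xs) := by
        have hM2 : M *ᵥ (x t - xs) = S⁻¹ *ᵥ (h + Γ *ᵥ x t) - S⁻¹ *ᵥ (h + Γ *ᵥ xs) := by
          rw [hMdef, ← mulVec_mulVec, Matrix.mulVec_sub Γ, ← Matrix.mulVec_sub S⁻¹]
          congr 1
          abel
        rw [hM2, hfix, ← hx t]
      rw [hstep, ih, mulVec_mulVec, ← pow_succ']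
  -- conclude
  have hxe : ∀ t, x t = M ^ t *ᵥ (x 0 - xs) + xs := by
    intro t
    have := herr t
    rw [← this]
    simp
  have hzero : Tendsto (fun t : ℕ => M ^ t *ᵥ (x 0 - xs)) atTop (nhds 0) := by
    rw [tendsto_pi_nhds]
    intro i
    have : Tendsto (fun t : ℕ => ∑ j, (M ^ t) i j * (x 0 - xs) j) atTop
        (nhds (∑ j : Fin n, 0 * (x 0 - xs) j)) := by
      refine tendsto_finset_sum _ fun j _ => ?_
      exact (((tendsto_pi_nhds.mp (tendsto_pi_nhds.mp hMtendsto i)) j)).mul_const _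
    simpa [Matrix.mulVec, dotProduct] using this
  have : Tendsto (fun t => M ^ t *ᵥ (x 0 - xs) + xs) atTop (nhds (0 + xs)) :=
    hzero.add tendsto_const_nhds
  rw [zero_add] at this
  exact this.congr fun t => (hxe t).symm
end
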